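/- arXiv:math-ph/9806002 — 3 statements merged into one kernel-verified Lean document; each statement's English description precedes it below -/
import Mathlib

section
/- Let B be an associative ring and g, L ∈ B such that ad_g^{m+1}(L) = 0 for some natural number m. Then g^{m+1} * L lies in the left ideal B*g generated by g; that is, there exists K ∈ B with g^{m+1} * L = K * g. -/
lemma factor_aux {B : Type*} [Ring B] (g L : B) :
    ∀ n : ℕ, ∃ K : B, g ^ n * L = K * g + (fun x => g * x - x * g)^[n] L := by
  intro n
  induction n with
  | zero => exact ⟨0, by simp⟩
  | succ n ih =>
    obtain ⟨K, hK⟩ := ih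
    refine ⟨g * K + (fun x => g * x - x * g)^[n] L, ?_⟩
    rw [Function.iterate_succ_apply', pow_succ', mul_assoc, hK]
    noncomm_ring

/-- If `ad_g^{m+1}(L) = 0` then `g^{m+1} * L` lies in the left ideal generated by `g`. -/
theorem factor_left_ideal {B : Type*} [Ring B] (g L : B) (m : ℕ)
    (h : (fun x => g * x - x * g)^[m + 1] L = 0) :
    ∃ K : B, g ^ (m + 1) * L = K * g := by
  obtain ⟨K, hK⟩ := factor_aux g L (m + 1)
  exact ⟨K, by rw [hK, h, add_zero]⟩
end

section
/- Let B be an associative ring and g, L ∈ B with ad_g^{m+1}(L) = 0. Then L * g^{m+1} lies in the right ideal g*B; that is, there exists R ∈ B with L * g^{m+1} = g * R. -/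
/-- If `ad_g^{m+1}(L) = 0` then `L * g^{m+1}` lies in the right ideal generated by `g`. -/
theorem factor_right_ideal {B : Type*} [Ring B] (g L : B) (m : ℕ)
    (h : (fun x => g * x - x * g)^[m + 1] L = 0) :
    ∃ R : B, L * g ^ (m + 1) = g * R := by
  induction m generalizing L with
  | zero =>
    rw [Function.iterate_one] at h
    refine ⟨L, ?_⟩
    rw [pow_one, eq_comm, ← sub_eq_zero]
    exact h
  | succ n ih =>
    have h' : (fun x => g * x - x * g)^[n + 1] (g * L - L * g) = 0 := by
      have := Function.iterate_succ_apply (fun x => g * x - x * g) (n + 1) L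
      rw [← this]
      exact h
    obtain ⟨R₁, hR₁⟩ := ih _ h'
    refine ⟨L * g ^ (n + 1) - R₁, ?_⟩
    have e1 : L * g ^ (n + 2) = (L * g) * g ^ (n + 1) := by
      rw [mul_assoc, ← pow_succ']
    rw [e1]
    have hLg : L * g = g * L - (g * L - L * g) := by abel
    rw [hLg, sub_mul, mul_assoc, hR₁, mul_sub]
end

section
/- Let B be an associative ring with elements g, L and suppose there exist K, Q ∈ B and invertible elements g^{-1}, (g^{m+1})^{-1} in a localization of B such that g^{m+1} L = K g and L^{n+1} g = Q L. Then L^{n+1} = Q (g^{m+1})^{-1} K in the localization; consequently, for any h of the form h = h' L^{n+1}, one has K h = (K h' Q (g^{m+1})^{-1}) K. -/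
/-- In a localization where `g` is invertible, the relations `g^{m+1} L = K g` and
`L^{n+1} g = Q L` give `L^{n+1} = Q (g^{m+1})⁻¹ K`, and hence the intertwining
`K h = (K h' Q (g^{m+1})⁻¹) K` for `h = h' L^{n+1}`. -/
theorem intertwining_computation {R : Type*} [Ring R] (g L K Q : R) (m n : ℕ)
    (u : Rˣ) (hu : (u : R) = g)
    (h1 : g ^ (m + 1) * L = K * g)
    (h2 : L ^ (n + 1) * g = Q * L) :
    L ^ (n + 1) = Q * ((u⁻¹ : Rˣ) : R) ^ (m + 1) * K ∧
      ∀ h' : R, K * (h' * L ^ (n + 1)) =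
        (K * h' * Q * ((u⁻¹ : Rˣ) : R) ^ (m + 1)) * K := by
  have hinv : ((u⁻¹ : Rˣ) : R) ^ (m + 1) = ((u ^ (m + 1))⁻¹ : Rˣ) := by
    rw [← inv_pow, Units.val_pow_eq_pow_val]
  have hg : ((u ^ (m + 1) : Rˣ) : R) = g ^ (m + 1) := by
    rw [Units.val_pow_eq_pow_val, hu]
  have hL : L = ((u⁻¹ : Rˣ) : R) ^ (m + 1) * (K * g) := by
    rw [hinv, Units.eq_inv_mul_iff_mul_eq, hg, h1]
  have key : L ^ (n + 1) = Q * ((u⁻¹ : Rˣ) : R) ^ (m + 1) * K := by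
    have h3 : L ^ (n + 1) * g = (Q * ((u⁻¹ : Rˣ) : R) ^ (m + 1) * K) * g := by
      rw [h2]
      nth_rewrite 1 [hL]
      noncomm_ring
    have := congrArg (· * ((u⁻¹ : Rˣ) : R)) h3
    simpa [mul_assoc, ← hu] using this
  refine ⟨key, fun h' => ?_⟩
  rw [key]
  noncomm_ring
end
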